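/- Let d = 2t with t even, let α = (1 2)(3 4)···(2t-1 2t) ∈ Σ_{2t}, and let β be the d-cycle (1 3 5 ... 2t-1 4)(2 6 8 ... 2t) consisting of two cycles: one of length t+1 listing the odd numbers in increasing order followed by 4, and one of length t-1 listing the even numbers other than 4 in increasing order. Then the group generated by α and β is transitive. -/

import Mathlib

/-- Let `d = 2t` with `t` even, let `α = (1 2)(3 4)⋯(2t-1 2t)` and let
`β = (1 3 5 … 2t-1 4)(2 6 8 … 2t)`.  Then `⟨α, β⟩` is transitive.
Points `1,…,2t` are encoded as `Fin d` (point `p` is the index `p - 1`),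
and `α`, `β` are described by their values:
`α` swaps each even index with its successor; `β` sends each even index
`i < d-2` to `i+2` (the odd points increase by `2`), index `d-2` (point `2t-1`)
to index `3` (point `4`), index `3` to index `0` (point `4` to point `1`),
index `1` to index `5` (point `2` to point `6`), each odd index
`5 ≤ i < d-1` to `i+2`, and index `d-1` (point `2t`) to index `1` (point `2`). -/
theorem stmt_10 (t d : ℕ) (ht : Even t) (ht0 : 0 < t) (hd : d = 2 * t)
    (α β : Equiv.Perm (Fin d))
    (hα : ∀ i : Fin d,
      ((i : ℕ) % 2 = 0 → ((α i : ℕ) = (i : ℕ) + 1)) ∧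
      ((i : ℕ) % 2 = 1 → ((α i : ℕ) = (i : ℕ) - 1)))
    (hβ₁ : ∀ i : Fin d, (i : ℕ) % 2 = 0 → (i : ℕ) < d - 2 → (β i : ℕ) = (i : ℕ) + 2)
    (hβ₂ : ∀ i : Fin d, (i : ℕ) = d - 2 → (β i : ℕ) = 3)
    (hβ₃ : ∀ i : Fin d, (i : ℕ) = 3 → (β i : ℕ) = 0)
    (hβ₄ : ∀ i : Fin d, (i : ℕ) = 1 → (β i : ℕ) = 5)
    (hβ₅ : ∀ i : Fin d, (i : ℕ) % 2 = 1 → 5 ≤ (i : ℕ) → (i : ℕ) < d - 1 →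
      (β i : ℕ) = (i : ℕ) + 2)
    (hβ₆ : ∀ i : Fin d, (i : ℕ) = d - 1 → (β i : ℕ) = 1) :
    ∀ x y : Fin d, ∃ g ∈ Subgroup.closure ({α, β} : Set (Equiv.Perm (Fin d))),
      g x = y := by
  have ht2 : 2 ≤ t := by rcases ht with ⟨k, hk⟩; omega
  have hd4 : 4 ≤ d := by omega
  have hd0 : 0 < d := by omega
  set G := Subgroup.closure ({α, β} : Set (Equiv.Perm (Fin d))) with hG
  have hαG : α ∈ G := Subgroup.subset_closure (by simp)
  have hβG : β ∈ G := Subgroup.subset_closure (by simp)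
  -- reach even indices
  have even_reach : ∀ k (h : 2 * k < d), ∃ g ∈ G, g ⟨0, hd0⟩ = ⟨2 * k, h⟩ := by
    intro k
    induction k with
    | zero => intro h; exact ⟨1, one_mem G, rfl⟩
    | succ k ih =>
      intro h
      obtain ⟨g, hg, hgx⟩ := ih (by omega)
      refine ⟨β * g, mul_mem hβG hg, ?_⟩
      have hb := hβ₁ ⟨2 * k, by omega⟩ (by simp [Nat.mul_mod_right]) (by simp; omega)
      apply Fin.ext
      simp only [Equiv.Perm.mul_apply, hgx]
      simp at hb ⊢
      omega
  have reach : ∀ n (h : n < d), ∃ g ∈ G, g ⟨0, hd0⟩ = ⟨n, h⟩ := by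
    have reach3 : ∃ g ∈ G, g ⟨0, hd0⟩ = ⟨3, by omega⟩ := by
      obtain ⟨g, hg, hgx⟩ := even_reach (t - 1) (by omega)
      refine ⟨β * g, mul_mem hβG hg, ?_⟩
      have hb := hβ₂ ⟨2 * (t - 1), by omega⟩ (by simp; omega)
      apply Fin.ext
      simp only [Equiv.Perm.mul_apply, hgx]
      exact hb
    have reach1 : ∃ g ∈ G, g ⟨0, hd0⟩ = ⟨1, by omega⟩ := by
      refine ⟨α, hαG, ?_⟩
      have := (hα ⟨0, hd0⟩).1 (by simp)
      apply Fin.ext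
      simp at this ⊢
      omega
    have odd_reach : ∀ k (h : 2 * k + 1 < d), ∃ g ∈ G, g ⟨0, hd0⟩ = ⟨2 * k + 1, h⟩ := by
      intro k
      induction k with
      | zero => intro h; exact reach1
      | succ k ih =>
        intro h
        rcases Nat.eq_or_lt_of_le (Nat.one_le_iff_ne_zero.mpr (by omega : k + 1 ≠ 0)) with hk1 | hk2
        · -- k + 1 = 1, target index 3
          have : 2 * (k + 1) + 1 = 3 := by omega
          rw [show (⟨2 * (k+1) + 1, h⟩ : Fin d) = ⟨3, by omega⟩ from Fin.ext this]
          exact reach3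
        · rcases Nat.eq_or_lt_of_le hk2 with hk2' | hk3
          · -- k + 1 = 2, target index 5, use β at 1
            obtain ⟨g, hg, hgx⟩ := reach1
            refine ⟨β * g, mul_mem hβG hg, ?_⟩
            have hb := hβ₄ ⟨1, by omega⟩ (by simp)
            apply Fin.ext
            simp only [Equiv.Perm.mul_apply, hgx]
            omega
          · -- k + 1 ≥ 3, target 2k+3 ≥ 7, use β at 2k+1 ≥ 5
            obtain ⟨g, hg, hgx⟩ := ih (by omega)
            refine ⟨β * g, mul_mem hβG hg, ?_⟩
            have hb := hβ₅ ⟨2 * k + 1, by omega⟩ (by simp) (by simp; omega) (by simp; omega)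
            apply Fin.ext
            simp only [Equiv.Perm.mul_apply, hgx]
            simp at hb ⊢
            omega
    intro n h
    rcases Nat.even_or_odd n with ⟨k, hk⟩ | ⟨k, hk⟩
    · rw [show (⟨n, h⟩ : Fin d) = ⟨2 * k, by omega⟩ from Fin.mk_eq_mk.mpr (by omega)]
      exact even_reach k (by omega)
    · rw [show (⟨n, h⟩ : Fin d) = ⟨2 * k + 1, by omega⟩ from Fin.mk_eq_mk.mpr (by omega)]
      exact odd_reach k (by omega)
  intro x y
  obtain ⟨gx, hgx, hgx0⟩ := reach x.val x.isLt
  obtain ⟨gy, hgy, hgy0⟩ := reach y.val y.isLt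
  refine ⟨gy * gx⁻¹, mul_mem hgy (inv_mem hgx), ?_⟩
  have hx : gx⁻¹ x = ⟨0, hd0⟩ := by
    have : gx ⟨0, hd0⟩ = x := by rw [hgx0]
    rw [← this]; exact Equiv.symm_apply_apply gx _
  simp [Equiv.Perm.mul_apply, hx, hgy0]
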